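/- In the modified Frege method with m ≥ 2 candidates, for all t ≥ 1 and all candidates j: -1 < Σ_{s=1}^t p_j^s - r_j(t) ≤ (m-1)/2, and the upper inequality is strict when m ≥ 3. -/
import Mathlib


open Finset Filter

/-- Modified Frege: -1 < Σ p_j^s - r_j(t) ≤ (m-1)/2, strictly above if m ≥ 3. -/
theorem modified_frege_quota_bounds (m : ℕ) (hm : 2 ≤ m)
    (p s : ℕ → Fin m → ℝ) (w : ℕ → Fin m)
    (hp0 : ∀ t j, 0 ≤ p t j)
    (hpsum : ∀ t, 1 ≤ t → ∑ j, p t j = 1)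
    (hs1 : ∀ j, s 1 j = p 1 j)
    (hsrec : ∀ t, 1 ≤ t → ∀ j,
      s (t + 1) j = s t j + p (t + 1) j - (if w t = j then 1 else 0))
    (hw : ∀ t, 1 ≤ t → ∀ j, s t j ≤ s t (w t)) :
    ∀ t, 1 ≤ t → ∀ j,
      (-1 < (∑ u ∈ Finset.Icc 1 t, p u j) -
          ((Finset.Icc 1 t).filter (fun u => w u = j)).card) ∧
      ((∑ u ∈ Finset.Icc 1 t, p u j) -
          ((Finset.Icc 1 t).filter (fun u => w u = j)).card ≤ ((m : ℝ) - 1) / 2) ∧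
      (3 ≤ m →
        (∑ u ∈ Finset.Icc 1 t, p u j) -
            ((Finset.Icc 1 t).filter (fun u => w u = j)).card < ((m : ℝ) - 1) / 2) := by
  have hmR : (2:ℝ) ≤ (m:ℝ) := by exact_mod_cast hm
  have hm0 : (0:ℝ) < (m:ℝ) := by linarith
  -- each score is at most 1
  have hp1 : ∀ u, 1 ≤ u → ∀ k, p u k ≤ 1 := by
    intro u hu k
    calc p u k ≤ ∑ j, p u j :=
          Finset.single_le_sum (fun i _ => hp0 u i) (Finset.mem_univ k)
      _ = 1 := hpsum u hu
  -- the quantity Q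
  set Q : ℝ := (1 - ((m:ℝ) - 2) * (1/(m:ℝ) - 1)) / 2 with hQ
  have hQ0 : (1:ℝ)/2 ≤ Q := by
    have h1 : (1:ℝ)/(m:ℝ) - 1 ≤ 0 := by
      have : (1:ℝ)/(m:ℝ) ≤ 1 := by
        rw [div_le_one hm0]; linarith
      linarith
    nlinarith
  -- pair bound: if the invariants hold at time n, a non-winner's score is at most Q
  have pair : ∀ n, 1 ≤ n → (∑ k, s n k = 1) → (∀ k, 1/(m:ℝ) - 1 ≤ s n k) →
      ∀ k, k ≠ w n → s n k ≤ Q := by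
    intro n hn hsum hlb k hk
    have hkmem : k ∈ Finset.univ.erase (w n) := Finset.mem_erase.2 ⟨hk, Finset.mem_univ _⟩
    have h1 : ∑ x ∈ Finset.univ.erase (w n), s n x = 1 - s n (w n) := by
      rw [Finset.sum_erase_eq_sub (Finset.mem_univ _), hsum]
    have h2 : ∑ x ∈ (Finset.univ.erase (w n)).erase k, s n x = 1 - s n (w n) - s n k := by
      rw [Finset.sum_erase_eq_sub hkmem, h1]
    have hcard : (((Finset.univ : Finset (Fin m)).erase (w n)).erase k).card = m - 2 := by
      rw [Finset.card_erase_of_mem hkmem, Finset.card_erase_of_mem (Finset.mem_univ _),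
        Finset.card_univ, Fintype.card_fin]
      omega
    have h3 : ((m:ℝ) - 2) * (1/(m:ℝ) - 1) ≤ 1 - s n (w n) - s n k := by
      rw [← h2]
      have hle := Finset.card_nsmul_le_sum ((Finset.univ.erase (w n)).erase k) (s n)
        (1/(m:ℝ) - 1) (fun x _ => hlb x)
      rw [hcard, nsmul_eq_mul] at hle
      have hcast : ((m - 2 : ℕ) : ℝ) = (m:ℝ) - 2 := by
        push_cast [Nat.cast_sub hm]; ring
      rwa [hcast] at hle
    have hks : s n k ≤ s n (w n) := hw n hn k
    rw [hQ]; linarith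
  -- main invariant
  have key : ∀ n, 1 ≤ n → (∑ k, s n k = 1) ∧ (∀ k, 1/(m:ℝ) - 1 ≤ s n k) ∧
      s n (w n) ≤ Q + 1 := by
    intro n hn
    induction n, hn using Nat.le_induction with
    | base =>
      refine ⟨by simp only [hs1]; exact hpsum 1 le_rfl, fun k => ?_, ?_⟩
      · rw [hs1]
        have := hp0 1 k
        have : (1:ℝ)/(m:ℝ) - 1 ≤ 0 := by
          have : (1:ℝ)/(m:ℝ) ≤ 1 := by rw [div_le_one hm0]; linarith
          linarith
        linarith [hp0 1 k]
      · rw [hs1]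
        have := hp1 1 le_rfl (w 1)
        linarith
    | succ n hn ih =>
      obtain ⟨hsum, hlb, hwin⟩ := ih
      have havg : (1:ℝ)/(m:ℝ) ≤ s n (w n) := by
        have hsle : (1:ℝ) ≤ (m:ℝ) * s n (w n) := by
          have h := Finset.sum_le_card_nsmul Finset.univ (s n) (s n (w n))
            (fun x _ => hw n hn x)
          rw [hsum, Finset.card_univ, Fintype.card_fin, nsmul_eq_mul] at h
          exact h
        have hinv : (1:ℝ)/(m:ℝ) * (m:ℝ) = 1 := by field_simp
        nlinarith [hsle, hinv, hm0]
      have hsum' : ∑ k, s (n+1) k = 1 := by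
        have : ∀ k, s (n+1) k = s n k + p (n+1) k - (if w n = k then 1 else 0) :=
          hsrec n hn
        simp only [this, Finset.sum_sub_distrib, Finset.sum_add_distrib, hsum,
          hpsum (n+1) (by omega), Finset.sum_ite_eq, Finset.mem_univ, if_true]
        ring
      have hlb' : ∀ k, 1/(m:ℝ) - 1 ≤ s (n+1) k := by
        intro k
        rw [hsrec n hn k]
        by_cases h : w n = k
        · subst h; rw [if_pos rfl]
          have := hp0 (n+1) (w n)
          linarith
        · simp only [if_neg h]
          have := hp0 (n+1) k
          linarith [hlb k]
      have hwin' : s (n+1) (w (n+1)) ≤ Q + 1 := by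
        rw [hsrec n hn (w (n+1))]
        by_cases h : w n = w (n+1)
        · simp only [if_pos h]
          rw [← h]
          have := hp1 (n+1) (by omega) (w (n+1))
          rw [← h] at this
          linarith
        · simp only [if_neg h]
          have hpb := pair n hn hsum hlb (w (n+1)) (fun hh => h hh.symm)
          have := hp1 (n+1) (by omega) (w (n+1))
          linarith
      exact ⟨hsum', hlb', hwin'⟩
  -- relation between the partial deviation and the score
  have rel : ∀ n, 1 ≤ n → ∀ k,
      (∑ u ∈ Finset.Icc 1 n, p u k) -
        (((Finset.Icc 1 n).filter (fun u => w u = k)).card : ℝ) =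
      s n k - (if w n = k then 1 else 0) := by
    intro n hn
    induction n, hn using Nat.le_induction with
    | base =>
      intro k
      rw [Finset.Icc_self]
      by_cases h : w 1 = k <;>
        simp [Finset.filter_singleton, h, hs1 k]
    | succ n hn ih =>
      intro k
      have hnot : (n+1) ∉ Finset.Icc 1 n := by simp
      have hins : Finset.Icc 1 (n+1) = insert (n+1) (Finset.Icc 1 n) := by
        exact (Finset.insert_Icc_right_eq_Icc_add_one (by omega)).symm
      rw [hins, Finset.sum_insert hnot, Finset.filter_insert]
      by_cases h : w (n+1) = k
      · rw [if_pos h, Finset.card_insert_of_notMem (by simp)]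
        push_cast
        have := ih k
        rw [hsrec n hn k]
        by_cases h' : w n = k <;> simp [h', h] at this ⊢ <;> linarith [this]
      · rw [if_neg h]
        have := ih k
        rw [hsrec n hn k]
        by_cases h' : w n = k <;> simp [h', h] at this ⊢ <;> linarith [this]
  -- conclude
  intro t ht j
  obtain ⟨hsum, hlb, hwin⟩ := key t ht
  have havg : (1:ℝ)/(m:ℝ) ≤ s t (w t) := by
    have hsle : (1:ℝ) ≤ (m:ℝ) * s t (w t) := by
      have h := Finset.sum_le_card_nsmul Finset.univ (s t) (s t (w t))
        (fun x _ => hw t ht x)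
      rw [hsum, Finset.card_univ, Fintype.card_fin, nsmul_eq_mul] at h
      exact h
    have hinv : (1:ℝ)/(m:ℝ) * (m:ℝ) = 1 := by field_simp
    nlinarith [hsle, hinv, hm0]
  have hrel := rel t ht j
  have hQle : Q ≤ ((m:ℝ) - 1) / 2 := by
    rw [hQ]
    rw [div_le_div_iff₀ (by norm_num) (by norm_num)]
    have hinv : (1:ℝ)/(m:ℝ) * (m:ℝ) = 1 := by field_simp
    nlinarith [hinv]
  have hQlt : 3 ≤ m → Q < ((m:ℝ) - 1) / 2 := by
    intro h3
    have h3R : (3:ℝ) ≤ (m:ℝ) := by exact_mod_cast h3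
    rw [hQ, div_lt_div_iff₀ (by norm_num) (by norm_num)]
    have hinv : (1:ℝ)/(m:ℝ) * (m:ℝ) = 1 := by field_simp
    nlinarith [hinv]
  have hDQ : (∑ u ∈ Finset.Icc 1 t, p u j) -
      (((Finset.Icc 1 t).filter (fun u => w u = j)).card : ℝ) ≤ Q := by
    rw [hrel]
    by_cases h : w t = j
    · subst h; rw [if_pos rfl]; linarith
    · simp only [if_neg h]
      have := pair t ht hsum hlb j (fun hh => h hh.symm)
      linarith
  refine ⟨?_, le_trans hDQ hQle, fun h3 => lt_of_le_of_lt hDQ (hQlt h3)⟩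
  rw [hrel]
  by_cases h : w t = j
  · subst h; rw [if_pos rfl]
    have : (0:ℝ) < 1/(m:ℝ) := by positivity
    linarith
  · simp only [if_neg h]
    have hx : (0:ℝ) < 1/(m:ℝ) := by positivity
    linarith [hlb j]
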